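/- arXiv:math/0112184 — 2 statements merged into one kernel-verified Lean document; each statement's English description precedes it below -/
import Mathlib

section
/- In the root system of type B₂ with short positive roots α₁, α₁+α₂ and long positive roots α₂, 2α₁+α₂, let W_K be the subgroup of the Weyl group generated by the reflections in the short roots. Then the element w = σ_{α₁+α₂} σ_{α₁} ∈ W_K satisfies w(α₂) = -α₂. Consequently, there is no W_K-equivariant section of the projection (Φ \ Φ_K) → (Φ \ Φ_K)/{±1}, where Φ_K is the set of short roots. -/
/-- The orthogonal reflection of a Euclidean space in the hyperplane `α^⊥`. -/
noncomputable def sref {E : Type*} [NormedAddCommGroup E] [InnerProductSpace ℝ E]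
    [FiniteDimensional ℝ E] (α : E) : E ≃ₗᵢ[ℝ] E :=
  (ℝ ∙ α)ᗮ.reflection

lemma sref_apply' {E : Type*} [NormedAddCommGroup E] [InnerProductSpace ℝ E]
    [FiniteDimensional ℝ E] (α x : E) :
    sref α x = x - ((2 : ℝ) * (inner ℝ α x : ℝ) / (inner ℝ α α : ℝ)) • α := by
  rw [sref, Submodule.reflection_apply, Submodule.starProjection_orthogonal_val,
    Submodule.starProjection_singleton, real_inner_self_eq_norm_sq]
  simp only [RCLike.ofReal_real_eq_id, id_eq]
  module

/-- In the root system of type `B₂` with short positive roots `α₁, α₁+α₂` and long positive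
roots `α₂, 2α₁+α₂` (encoded by the Gram data `⟨α₁,α₁⟩ = 1`, `⟨α₂,α₂⟩ = 2`, `⟨α₁,α₂⟩ = -1`),
the element `w = σ_{α₁+α₂} σ_{α₁}` of `W_K = ⟨σ_{α₁}, σ_{α₁+α₂}⟩` satisfies `w(α₂) = -α₂`;
consequently there is no `W_K`-equivariant section of `(Φ \ Φ_K) → (Φ \ Φ_K)/{±1}`. -/
theorem b2_no_equivariant_section
    {E : Type*} [NormedAddCommGroup E] [InnerProductSpace ℝ E] [FiniteDimensional ℝ E]
    (α₁ α₂ : E) (h11 : (inner ℝ α₁ α₁ : ℝ) = 1) (h22 : (inner ℝ α₂ α₂ : ℝ) = 2)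
    (h12 : (inner ℝ α₁ α₂ : ℝ) = -1) :
    (sref (α₁ + α₂) * sref α₁) α₂ = -α₂ ∧
      ¬ ∃ Δ₀ : Set E,
        Δ₀ ⊆ ({α₂, -α₂, 2 • α₁ + α₂, -(2 • α₁ + α₂)} : Set E) ∧
        (∀ α ∈ ({α₂, -α₂, 2 • α₁ + α₂, -(2 • α₁ + α₂)} : Set E),
          Xor' (α ∈ Δ₀) (-α ∈ Δ₀)) ∧
        (∀ w ∈ Subgroup.closure {sref α₁, sref (α₁ + α₂)}, ∀ α ∈ Δ₀, w α ∈ Δ₀) := by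
  have h21 : (inner ℝ α₂ α₁ : ℝ) = -1 := by rw [real_inner_comm]; exact h12
  have step1 : sref α₁ α₂ = α₂ + (2 : ℝ) • α₁ := by
    rw [sref_apply', h11, h12]
    norm_num
  have key : (sref (α₁ + α₂) * sref α₁) α₂ = -α₂ := by
    show sref (α₁ + α₂) (sref α₁ α₂) = -α₂
    rw [step1, sref_apply']
    simp only [inner_add_left, inner_add_right, real_inner_smul_left, real_inner_smul_right,
      h11, h12, h21, h22]
    norm_num
    module
  refine ⟨key, ?_⟩
  rintro ⟨Δ₀, -, hxor, hinv⟩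
  set w : E ≃ₗᵢ[ℝ] E := sref (α₁ + α₂) * sref α₁ with hw
  have hwmem : w ∈ Subgroup.closure {sref α₁, sref (α₁ + α₂)} := by
    exact mul_mem (Subgroup.subset_closure (by simp)) (Subgroup.subset_closure (by simp))
  have hx := hxor α₂ (by simp)
  rcases hx with ⟨h1, h2⟩ | ⟨h1, h2⟩
  · have := hinv w hwmem α₂ h1
    rw [key] at this
    exact h2 this
  · have := hinv w hwmem (-α₂) h1
    have hneg : w (-α₂) = α₂ := by
      rw [map_neg, key, neg_neg]
    rw [hneg] at this
    exact h2 this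
end

section
/- Let Δ₀ = {α₂, 3α₁+α₂, -(3α₁+2α₂)} be the W_K-equivariant choice of long roots in the G₂ root system (W_K generated by reflections in short roots). Then α₂ + (3α₁+α₂) + (-(3α₁+2α₂)) = 0; consequently, for every regular ξ, at each vertex of the associated two-vertex GKM graph at least one outgoing edge label is positive and at least one is negative on ξ, so there exists no function f on the two vertices that is strictly increasing along every edge e with α_e(ξ) > 0 (no compatible Morse function exists). -/
/-- In the `G₂` root system (Gram data `⟨α₁,α₁⟩ = 2`, `⟨α₂,α₂⟩ = 6`, `⟨α₁,α₂⟩ = -3`), the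
`W_K`-equivariant choice of long roots `Δ₀ = {α₂, 3α₁+α₂, -(3α₁+2α₂)}` sums to zero; hence for
every regular `ξ`, at each of the two vertices of the GKM graph at least one outgoing edge
label pairs positively and at least one pairs negatively with `ξ`, so no Morse function
compatible with `ξ` exists on the two-vertex graph. -/
theorem g2_no_morse_function
    {E : Type*} [NormedAddCommGroup E] [InnerProductSpace ℝ E] [FiniteDimensional ℝ E]
    (α₁ α₂ : E) (h11 : (inner ℝ α₁ α₁ : ℝ) = 2) (h22 : (inner ℝ α₂ α₂ : ℝ) = 6)
    (h12 : (inner ℝ α₁ α₂ : ℝ) = -3) :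
    α₂ + (3 • α₁ + α₂) + (-(3 • α₁ + 2 • α₂)) = 0 ∧
      ∀ ξ : E,
        (∀ β ∈ ({α₁, -α₁, α₁ + α₂, -(α₁ + α₂), 2 • α₁ + α₂, -(2 • α₁ + α₂),
            α₂, -α₂, 3 • α₁ + α₂, -(3 • α₁ + α₂), 3 • α₁ + 2 • α₂,
            -(3 • α₁ + 2 • α₂)} : Set E), (inner ℝ β ξ : ℝ) ≠ 0) →
        ((∃ β ∈ ({α₂, 3 • α₁ + α₂, -(3 • α₁ + 2 • α₂)} : Set E), 0 < (inner ℝ β ξ : ℝ)) ∧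
          (∃ β ∈ ({α₂, 3 • α₁ + α₂, -(3 • α₁ + 2 • α₂)} : Set E), (inner ℝ β ξ : ℝ) < 0)) ∧
        ¬ ∃ f : Fin 2 → ℝ, ∀ β ∈ ({α₂, 3 • α₁ + α₂, -(3 • α₁ + 2 • α₂)} : Set E),
            (0 < (inner ℝ β ξ : ℝ) → f 0 < f 1) ∧ (0 < (inner ℝ (-β) ξ : ℝ) → f 1 < f 0) := by

  have hsum : α₂ + (3 • α₁ + α₂) + (-(3 • α₁ + 2 • α₂)) = 0 := by
    simp [two_smul]; abel
  refine ⟨hsum, fun ξ hreg => ?_⟩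
  set a : ℝ := inner ℝ α₂ ξ
  set b : ℝ := inner ℝ (3 • α₁ + α₂) ξ
  set c : ℝ := inner ℝ (-(3 • α₁ + 2 • α₂)) ξ
  have habc : a + b + c = 0 := by
    have : (inner ℝ (α₂ + (3 • α₁ + α₂) + (-(3 • α₁ + 2 • α₂))) ξ : ℝ) = 0 := by
      rw [hsum]; simp
    simpa [a, b, c, inner_add_left] using this
  have ha : a ≠ 0 := hreg α₂ (by simp)
  have hb : b ≠ 0 := hreg (3 • α₁ + α₂) (by simp)
  have hc : c ≠ 0 := hreg (-(3 • α₁ + 2 • α₂)) (by simp)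
  have hpos : ∃ β ∈ ({α₂, 3 • α₁ + α₂, -(3 • α₁ + 2 • α₂)} : Set E), 0 < (inner ℝ β ξ : ℝ) := by
    rcases lt_or_gt_of_ne ha with h | h
    · rcases lt_or_gt_of_ne hb with h' | h'
      · exact ⟨-(3 • α₁ + 2 • α₂), by simp, by simp only [c] at *; linarith⟩
      · exact ⟨3 • α₁ + α₂, by simp, h'⟩
    · exact ⟨α₂, by simp, h⟩
  have hneg : ∃ β ∈ ({α₂, 3 • α₁ + α₂, -(3 • α₁ + 2 • α₂)} : Set E), (inner ℝ β ξ : ℝ) < 0 := by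
    rcases lt_or_gt_of_ne ha with h | h
    · exact ⟨α₂, by simp, h⟩
    · rcases lt_or_gt_of_ne hb with h' | h'
      · exact ⟨3 • α₁ + α₂, by simp, h'⟩
      · exact ⟨-(3 • α₁ + 2 • α₂), by simp, by simp only [c] at *; linarith⟩
  refine ⟨⟨hpos, hneg⟩, ?_⟩
  rintro ⟨f, hf⟩
  obtain ⟨β, hβ, hβpos⟩ := hpos
  obtain ⟨γ, hγ, hγneg⟩ := hneg
  have h1 : f 0 < f 1 := (hf β hβ).1 hβpos
  have h2 : f 1 < f 0 := (hf γ hγ).2 (by simpa [inner_neg_left] using neg_pos.mpr hγneg)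
  linarith
end
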